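/- arXiv:1609.08816 — 2 statements merged into one kernel-verified Lean document; each statement's English description precedes it below -/
import Mathlib

section
/- Let fUZ : ℝ × ℝ → ℝ and fWU : ℝ × ℝ → ℝ be nonnegative measurable functions, let pYU : ℝ → ℝ be a bounded measurable function, and let h : ℝ → ℝ be measurable. Define fWZ(w, z) = ∫ fWU(w, u) fUZ(u, z) du. Assume: (a) for almost every z, the function (w, u) ↦ |h(w)| fWU(w, u) fUZ(u, z) is integrable on ℝ² and u ↦ |pYU(u)| fUZ(u, z) is integrable on ℝ; (b) the completeness condition: for every measurable g : ℝ → ℝ such that u ↦ |g(u)| fUZ(u, z) is integrable for almost every z, if ∫ g(u) fUZ(u, z) du = 0 for almost every z then g(u) = 0 for almost every u; (c) h solves the integral equation: for almost every z, ∫ pYU(u) fUZ(u, z) du = ∫ h(w) fWZ(w, z) dw. Then for almost every u, ∫ h(w) fWU(w, u) dw = pYU(u). -/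
open MeasureTheory

theorem stmt_4 (fUZ fWU : ℝ × ℝ → ℝ) (pYU h : ℝ → ℝ)
    (hfUZ_meas : Measurable fUZ) (hfUZ_nonneg : ∀ p, 0 ≤ fUZ p)
    (hfWU_meas : Measurable fWU) (hfWU_nonneg : ∀ p, 0 ≤ fWU p)
    (hpYU_meas : Measurable pYU) (hpYU_bdd : ∃ C, ∀ u, |pYU u| ≤ C)
    (hh_meas : Measurable h)
    (fWZ : ℝ → ℝ → ℝ) (hfWZ : ∀ w z, fWZ w z = ∫ u, fWU (w, u) * fUZ (u, z))
    -- (a) integrability conditions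
    (hint₁ : ∀ᵐ z, Integrable (fun p : ℝ × ℝ => |h p.1| * fWU (p.1, p.2) * fUZ (p.2, z)))
    (hint₂ : ∀ᵐ z, Integrable (fun u => |pYU u| * fUZ (u, z)))
    -- (b) completeness condition
    (hcomplete : ∀ g : ℝ → ℝ, Measurable g →
      (∀ᵐ z, Integrable (fun u => |g u| * fUZ (u, z))) →
      (∀ᵐ z, ∫ u, g u * fUZ (u, z) = 0) → (∀ᵐ u, g u = 0))
    -- (c) h solves the integral equation
    (hsol : ∀ᵐ z, ∫ u, pYU u * fUZ (u, z) = ∫ w, h w * fWZ w z) :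
    ∀ᵐ u, ∫ w, h w * fWU (w, u) = pYU u := by
  set g : ℝ → ℝ := fun u => (∫ w, h w * fWU (w, u)) - pYU u with hg
  -- measurability of g
  have hI_meas : Measurable fun u => ∫ w, h w * fWU (w, u) := by
    have hm : Measurable (fun p : ℝ × ℝ => h p.2 * fWU (p.2, p.1)) :=
      (hh_meas.comp measurable_snd).mul (hfWU_meas.comp (measurable_snd.prodMk measurable_fst))
    exact hm.stronglyMeasurable.integral_prod_right'.measurable
  have hg_meas : Measurable g := hI_meas.sub hpYU_meas
  -- pointwise bound: |g u| ≤ ∫ w, |h w| * fWU (w,u) + |pYU u|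
  have hbound : ∀ u, |g u| ≤ (∫ w, |h w| * fWU (w, u)) + |pYU u| := by
    intro u
    have h1 : |∫ w, h w * fWU (w, u)| ≤ ∫ w, |h w| * fWU (w, u) := by
      have habs : ∀ w, |fWU (w, u)| = fWU (w, u) := fun w => abs_of_nonneg (hfWU_nonneg _)
      simpa [Real.norm_eq_abs, abs_mul, habs] using
        norm_integral_le_integral_norm (μ := volume) (fun w => h w * fWU (w, u))
    calc |g u| ≤ |∫ w, h w * fWU (w, u)| + |pYU u| := abs_sub _ _
      _ ≤ (∫ w, |h w| * fWU (w, u)) + |pYU u| := by linarith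
  -- integrability hypothesis for completeness
  have hgint : ∀ᵐ z, Integrable (fun u => |g u| * fUZ (u, z)) := by
    filter_upwards [hint₁, hint₂] with z h1 h2
    have habs : Integrable (fun u => (∫ w, |h w| * fWU (w, u)) * fUZ (u, z)) := by
      have := h1.integral_prod_right
      refine this.congr ?_
      filter_upwards with u
      rw [← integral_mul_const]
    refine (habs.add h2).mono' ?_ ?_
    · exact ((hg_meas.abs.mul
        (hfUZ_meas.comp (measurable_id.prodMk measurable_const))).aestronglyMeasurable)
    · filter_upwards with u
      have h0 : (0:ℝ) ≤ |g u| * fUZ (u, z) :=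
        mul_nonneg (abs_nonneg _) (hfUZ_nonneg _)
      rw [Real.norm_eq_abs, abs_of_nonneg h0]
      have := mul_le_mul_of_nonneg_right (hbound u) (hfUZ_nonneg (u, z))
      calc |g u| * fUZ (u, z)
          ≤ ((∫ w, |h w| * fWU (w, u)) + |pYU u|) * fUZ (u, z) := this
        _ = (∫ w, |h w| * fWU (w, u)) * fUZ (u, z) + |pYU u| * fUZ (u, z) := by ring
  -- the integral equation for g
  have hgzero : ∀ᵐ z, ∫ u, g u * fUZ (u, z) = 0 := by
    filter_upwards [hint₁, hint₂, hsol] with z h1 h2 hs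
    set F : ℝ × ℝ → ℝ := fun p => h p.1 * fWU p * fUZ (p.2, z) with hF
    have hFmeas : Measurable F :=
      ((hh_meas.comp measurable_fst).mul hfWU_meas).mul
        (hfUZ_meas.comp (measurable_snd.prodMk measurable_const))
    have hFint : Integrable F := by
      refine h1.mono' hFmeas.aestronglyMeasurable ?_
      filter_upwards with p
      rw [Real.norm_eq_abs, hF]
      simp only
      rw [abs_mul, abs_mul, abs_of_nonneg (hfWU_nonneg _), abs_of_nonneg (hfUZ_nonneg _)]
    -- integrability of each term
    have hterm1 : Integrable (fun u => (∫ w, h w * fWU (w, u)) * fUZ (u, z)) := by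
      refine hFint.integral_prod_right.congr ?_
      filter_upwards with u
      rw [← integral_mul_const]
    have hterm2 : Integrable (fun u => pYU u * fUZ (u, z)) := by
      refine h2.mono' ((hpYU_meas.mul
        (hfUZ_meas.comp (measurable_id.prodMk measurable_const))).aestronglyMeasurable) ?_
      filter_upwards with u
      rw [Real.norm_eq_abs, abs_mul, abs_of_nonneg (hfUZ_nonneg _)]
    have key : ∫ u, (∫ w, h w * fWU (w, u)) * fUZ (u, z) = ∫ w, h w * fWZ w z := by
      have e1 : ∫ u, (∫ w, h w * fWU (w, u)) * fUZ (u, z) = ∫ u, ∫ w, F (w, u) := by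
        congr 1; funext u
        rw [← integral_mul_const]
      have e2 : ∫ u, ∫ w, F (w, u) = ∫ w, ∫ u, F (w, u) :=
        (integral_integral_swap (f := fun w u => F (w, u)) hFint).symm
      have e3 : ∫ w, ∫ u, F (w, u) = ∫ w, h w * fWZ w z := by
        congr 1; funext w
        rw [hfWZ, ← integral_const_mul]
        congr 1; funext u
        simp [hF, mul_assoc]
      rw [e1, e2, e3]
    calc ∫ u, g u * fUZ (u, z)
        = ∫ u, ((∫ w, h w * fWU (w, u)) * fUZ (u, z) - pYU u * fUZ (u, z)) := by
          congr 1; funext u; rw [hg]; ring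
      _ = (∫ u, (∫ w, h w * fWU (w, u)) * fUZ (u, z)) - ∫ u, pYU u * fUZ (u, z) :=
          integral_sub hterm1 hterm2
      _ = 0 := by rw [key, hs]; ring
  have := hcomplete g hg_meas hgint hgzero
  filter_upwards [this] with u hu
  have : (∫ w, h w * fWU (w, u)) - pYU u = 0 := hu
  linarith
end

section
/- Let fWU : ℝ × ℝ → ℝ be a nonnegative measurable function, let pYU : ℝ → ℝ be a bounded measurable function, let h : ℝ → ℝ be measurable, and let fU : ℝ → ℝ be a nonnegative integrable function. Define fW(w) = ∫ fWU(w, u) fU(u) du. Assume that the function (w, u) ↦ |h(w)| fWU(w, u) fU(u) is integrable on ℝ², and that for almost every u, ∫ h(w) fWU(w, u) dw = pYU(u). Then ∫ h(w) fW(w) dw = ∫ pYU(u) fU(u) du. -/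
open MeasureTheory

theorem stmt_5 (fWU : ℝ × ℝ → ℝ) (pYU h fU : ℝ → ℝ)
    (hfWU_meas : Measurable fWU) (hfWU_nonneg : ∀ p, 0 ≤ fWU p)
    (hpYU_meas : Measurable pYU) (hpYU_bdd : ∃ C, ∀ u, |pYU u| ≤ C)
    (hh_meas : Measurable h)
    (hfU_nonneg : ∀ u, 0 ≤ fU u) (hfU_int : Integrable fU)
    (fW : ℝ → ℝ) (hfW : ∀ w, fW w = ∫ u, fWU (w, u) * fU u)
    (hint : Integrable (fun p : ℝ × ℝ => |h p.1| * fWU (p.1, p.2) * fU p.2))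
    (hsol : ∀ᵐ u, ∫ w, h w * fWU (w, u) = pYU u) :
    ∫ w, h w * fW w = ∫ u, pYU u * fU u := by
  set F : ℝ × ℝ → ℝ := fun p => h p.1 * fWU (p.1, p.2) * fU p.2 with hF
  have hFmeas : AEStronglyMeasurable F volume :=
    (((hh_meas.comp measurable_fst).mul hfWU_meas).aestronglyMeasurable.mul
      (hfU_int.aestronglyMeasurable.comp_quasiMeasurePreserving
        MeasureTheory.Measure.quasiMeasurePreserving_snd))
  have hFint : Integrable F := by
    refine hint.mono' hFmeas (Filter.Eventually.of_forall fun p => ?_)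
    have h1 : |F p| = |h p.1| * fWU (p.1, p.2) * fU p.2 := by
      simp only [hF, abs_mul, abs_of_nonneg (hfWU_nonneg _), abs_of_nonneg (hfU_nonneg _)]
    rw [Real.norm_eq_abs, h1]
  calc ∫ w, h w * fW w = ∫ w, ∫ u, F (w, u) := by
        refine integral_congr_ae (Filter.Eventually.of_forall fun w => ?_)
        simp only [hfW w, hF, ← integral_const_mul]
        exact integral_congr_ae (Filter.Eventually.of_forall fun u => by ring)
    _ = ∫ u, ∫ w, F (w, u) := integral_integral_swap hFint
    _ = ∫ u, pYU u * fU u := by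
        refine integral_congr_ae (hsol.mono fun u hu => ?_)
        simp only [hF]
        rw [integral_mul_const, hu]
end
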